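/- Let g : [0,1] → ℂ be continuous and let f : 𝔻 → ℂ be the radial function f(u) = g(|u|) on the open unit disk 𝔻. Then for every w ∈ 𝔻 with w ≠ 0, the Cauchy transform satisfies f̂(w) := −(1/π) ∫_𝔻 f(z)/(z − w) dA(z) = (2/w) ∫₀^{|w|} g(r) r dr. -/

import Mathlib

open MeasureTheory Real Set


lemma aux_integrable_polar {E : Type*} [NormedAddCommGroup E] [NormedSpace ℝ E]
    (f : ℝ × ℝ → E) :
    Integrable f ↔
      IntegrableOn (fun p : ℝ × ℝ => p.1 • f (polarCoord.symm p)) polarCoord.target := by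
  set B : ℝ × ℝ → ℝ × ℝ →L[ℝ] ℝ × ℝ := fun p =>
    LinearMap.toContinuousLinearMap (Matrix.toLin (Module.Basis.finTwoProd ℝ) (Module.Basis.finTwoProd ℝ)
      !![cos p.2, -p.1 * sin p.2; sin p.2, p.1 * cos p.2])
  have A : ∀ p ∈ polarCoord.target, HasFDerivWithinAt polarCoord.symm (B p) polarCoord.target p :=
    fun p _ => (hasFDerivAt_polarCoord_symm p).hasFDerivWithinAt
  have B_det : ∀ p, (B p).det = p.1 := by
    intro p
    conv_rhs => rw [← one_mul p.1, ← cos_sq_add_sin_sq p.2]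
    simp only [B, neg_mul, LinearMap.det_toContinuousLinearMap, LinearMap.det_toLin,
      Matrix.det_fin_two_of, sub_neg_eq_add]
    ring
  have hinj : Set.InjOn polarCoord.symm polarCoord.target := polarCoord.symm.injOn
  have himg : polarCoord.symm '' polarCoord.target = polarCoord.source :=
    polarCoord.symm_image_target_eq_source
  have h1 := integrableOn_image_iff_integrableOn_abs_det_fderiv_smul volume
    polarCoord.open_target.measurableSet A hinj f
  rw [himg] at h1
  have h2 : IntegrableOn f polarCoord.source ↔ Integrable f := by
    rw [IntegrableOn, Measure.restrict_congr_set polarCoord_source_ae_eq_univ,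
      Measure.restrict_univ]
  rw [← h2, h1]
  refine integrableOn_congr_fun (fun p hp => ?_) polarCoord.open_target.measurableSet
  rw [B_det, abs_of_pos hp.1]

lemma aux_integrable_polarC {E : Type*} [NormedAddCommGroup E] [NormedSpace ℝ E]
    (f : ℂ → E) :
    Integrable f ↔
      IntegrableOn (fun p : ℝ × ℝ => p.1 • f (Complex.polarCoord.symm p)) polarCoord.target := by
  rw [← (Complex.volume_preserving_equiv_real_prod.symm).integrable_comp_emb
    Complex.measurableEquivRealProd.symm.measurableEmbedding,
    aux_integrable_polar]
  rfl

lemma aux_inv_norm_int (w : ℂ) (hw : w ∈ Metric.ball (0:ℂ) 1) :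
    IntegrableOn (fun z : ℂ => ‖z - w‖⁻¹) (Metric.ball (0:ℂ) 1) := by
  have T1 : Integrable ((Metric.ball (0:ℂ) 2).indicator (fun z : ℂ => ‖z‖⁻¹)) := by
    rw [aux_integrable_polarC]
    have heq : EqOn
        (fun p : ℝ × ℝ => p.1 • (Metric.ball (0:ℂ) 2).indicator (fun z : ℂ => ‖z‖⁻¹)
          (Complex.polarCoord.symm p))
        ((Ioo (0:ℝ) 2 ×ˢ Ioo (-π) π).indicator (fun _ => (1:ℝ))) polarCoord.target := by
      intro p hp
      have habs : ‖Complex.polarCoord.symm p‖ = p.1 := by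
        rw [Complex.norm_polarCoord_symm, abs_of_pos hp.1]
      by_cases h2 : p.1 < 2
      · have hm1 : Complex.polarCoord.symm p ∈ Metric.ball (0:ℂ) 2 := by
          rw [Metric.mem_ball, Complex.dist_eq, sub_zero, habs]; exact h2
        have hm2 : p ∈ Ioo (0:ℝ) 2 ×ˢ Ioo (-π) π := ⟨⟨hp.1, h2⟩, hp.2⟩
        simp only [indicator_of_mem hm1, indicator_of_mem hm2, habs,
          smul_eq_mul]
        exact mul_inv_cancel₀ (mem_Ioi.1 hp.1).ne'
      · have hm1 : Complex.polarCoord.symm p ∉ Metric.ball (0:ℂ) 2 := by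
          rw [Metric.mem_ball, Complex.dist_eq, sub_zero, habs]; exact h2
        have hm2 : p ∉ Ioo (0:ℝ) 2 ×ˢ Ioo (-π) π := by
          intro h
          exact h2 h.1.2
        simp only [indicator_of_notMem hm1, indicator_of_notMem hm2, smul_zero]
    refine IntegrableOn.congr_fun ?_ heq.symm polarCoord.open_target.measurableSet
    refine (integrable_indicator_iff ((measurableSet_Ioo).prod measurableSet_Ioo)).2 ?_ |>.integrableOn
    refine integrableOn_const (lt_top_iff_ne_top.1 ?_)
    rw [Measure.volume_eq_prod, Measure.prod_prod]
    exact ENNReal.mul_lt_top (by simp) (by simp)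
  have T2 : IntegrableOn (fun z : ℂ => ‖z - w‖⁻¹) (Metric.ball w 2) := by
    rw [← integrable_indicator_iff measurableSet_ball]
    rw [← (measurePreserving_add_right volume w).integrable_comp_emb
      (measurableEmbedding_addRight w)]
    have : ((Metric.ball w 2).indicator (fun z : ℂ => ‖z - w‖⁻¹)) ∘ (· + w)
        = (Metric.ball (0:ℂ) 2).indicator (fun z : ℂ => ‖z‖⁻¹) := by
      funext z
      simp only [Function.comp_apply, indicator]
      by_cases h : z ∈ Metric.ball (0:ℂ) 2
      · rw [if_pos (by simpa [Metric.mem_ball, Complex.dist_eq] using h), if_pos h,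
          add_sub_cancel_right]
      · rw [if_neg (by simpa [Metric.mem_ball, Complex.dist_eq] using h), if_neg h]
    rw [this]
    exact T1
  refine T2.mono_set fun z hz => ?_
  simp only [Metric.mem_ball] at hz ⊢
  calc dist z w ≤ dist z 0 + dist 0 w := dist_triangle _ _ _
    _ < 1 + 1 := by
        rw [Metric.mem_ball] at hw
        rw [dist_comm 0 w]; exact add_lt_add hz hw
    _ = 2 := by norm_num


lemma aux_J (w : ℂ) (hw0 : w ≠ 0) (r : ℝ) (hr : 0 < r) (hra : r ≠ ‖w‖) :
    (∫ θ in Ioo (-π) π, (circleMap 0 r θ - w)⁻¹) =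
      if r < ‖w‖ then -(2 * π) / w else 0 := by
  have hz_ne : ∀ θ : ℝ, circleMap 0 r θ ≠ 0 := fun θ => circleMap_ne_center hr.ne'
  have hw_ne : ∀ θ : ℝ, circleMap 0 r θ ≠ w := fun θ => by
    intro h
    apply hra
    have := norm_circleMap_zero r θ
    rw [h] at this
    rw [this, abs_of_pos hr]
  have h1 : (∫ θ in Ioo (-π) π, (circleMap 0 r θ - w)⁻¹)
      = ∫ θ in (-π)..π, (circleMap 0 r θ - w)⁻¹ := by
    rw [intervalIntegral.integral_of_le (by linarith [pi_pos]), integral_Ioc_eq_integral_Ioo]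
  have hper : Function.Periodic (fun θ => (circleMap 0 r θ - w)⁻¹) (2 * π) := fun θ => by
    simp [periodic_circleMap 0 r θ]
  have h2 : (∫ θ in (-π)..π, (circleMap 0 r θ - w)⁻¹)
      = ∫ θ in (0:ℝ)..2 * π, (circleMap 0 r θ - w)⁻¹ := by
    have h := hper.intervalIntegral_add_eq (-π) 0
    rw [show -π + 2 * π = π by ring, zero_add] at h
    exact h
  have h3 : (∮ z in C(0, r), (z * (z - w))⁻¹)
      = Complex.I * ∫ θ in (0:ℝ)..2 * π, (circleMap 0 r θ - w)⁻¹ := by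
    simp only [circleIntegral]
    rw [← intervalIntegral.integral_const_mul]
    apply intervalIntegral.integral_congr
    intro θ _
    simp only [deriv_circleMap, smul_eq_mul, mul_inv]
    have hz := hz_ne θ
    rw [show circleMap 0 r θ * Complex.I * ((circleMap 0 r θ)⁻¹ * (circleMap 0 r θ - w)⁻¹)
        = (circleMap 0 r θ * (circleMap 0 r θ)⁻¹) * (Complex.I * (circleMap 0 r θ - w)⁻¹) by ring,
      mul_inv_cancel₀ hz, one_mul]
  have hsub1 : CircleIntegrable (fun z => (z - w)⁻¹) 0 r := by
    refine circleIntegrable_sub_inv_iff.2 (Or.inr fun h => ?_)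
    rw [mem_sphere_iff_norm] at h
    apply hra
    rw [abs_of_pos hr] at h
    simpa using h.symm
  have hsub2 : CircleIntegrable (fun z => (z - 0)⁻¹) 0 r := by
    refine circleIntegrable_sub_inv_iff.2 (Or.inr fun h => ?_)
    rw [mem_sphere_iff_norm] at h
    simp [abs_of_pos hr] at h
    exact hr.ne h
  have h4 : (∮ z in C(0, r), (z * (z - w))⁻¹)
      = w⁻¹ * ((∮ z in C(0, r), (z - w)⁻¹) - ∮ z in C(0, r), (z - 0)⁻¹) := by
    rw [← circleIntegral.integral_sub hsub1 hsub2, ← smul_eq_mul,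
      ← circleIntegral.integral_smul]
    apply circleIntegral.integral_congr hr.le
    intro z hz
    rw [mem_sphere_iff_norm, sub_zero] at hz
    have hz0 : z ≠ 0 := by
      intro h; rw [h] at hz; simp at hz; exact hr.ne hz
    have hzw : z ≠ w := by
      intro h
      apply hra
      rw [← h] at *
      simpa using hz.symm
    have hzw' : z - w ≠ 0 := sub_ne_zero.2 hzw
    simp only [smul_eq_mul, sub_zero]
    field_simp
    ring
  have h5 : (∮ z in C(0, r), (z - 0)⁻¹) = 2 * π * Complex.I :=
    circleIntegral.integral_sub_inv_of_mem_ball (by simpa using hr)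
  rw [h1, h2]
  by_cases hlt : r < ‖w‖
  · have h6 : (∮ z in C(0, r), (z - w)⁻¹) = 0 := by
      apply Complex.circleIntegral_eq_zero_of_differentiable_on_off_countable hr.le Set.countable_empty
      · apply ContinuousOn.inv₀ ((continuous_sub_right w).continuousOn)
        intro z hz
        refine sub_ne_zero.2 fun h => ?_
        rw [Metric.mem_closedBall, Complex.dist_eq, sub_zero] at hz
        rw [h] at hz
        exact absurd hz (not_le.2 hlt)
      · intro z hz
        obtain ⟨hz1, -⟩ := hz
        refine (differentiableAt_id.sub_const w).inv (sub_ne_zero.2 fun h => ?_)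
        rw [Metric.mem_ball, Complex.dist_eq, sub_zero] at hz1
        rw [show z = w from h] at hz1
        exact absurd hz1 (not_lt.2 hlt.le)
    rw [if_pos hlt]
    have h7 : Complex.I * (∫ θ in (0:ℝ)..2 * π, (circleMap 0 r θ - w)⁻¹)
        = w⁻¹ * (0 - 2 * π * Complex.I) := by rw [← h3, h4, h6, h5]
    apply mul_left_cancel₀ Complex.I_ne_zero
    rw [h7]
    ring
  · have h6 : (∮ z in C(0, r), (z - w)⁻¹) = 2 * π * Complex.I := by
      apply circleIntegral.integral_sub_inv_of_mem_ball
      rw [Metric.mem_ball, Complex.dist_eq, sub_zero]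
      exact lt_of_le_of_ne (not_lt.1 hlt) (fun h => hra h.symm)
    rw [if_neg hlt]
    have h7 : Complex.I * (∫ θ in (0:ℝ)..2 * π, (circleMap 0 r θ - w)⁻¹)
        = w⁻¹ * (2 * π * Complex.I - 2 * π * Complex.I) := by rw [← h3, h4, h6, h5]
    apply mul_left_cancel₀ Complex.I_ne_zero
    rw [h7]
    ring

theorem stmt17 (g : ℝ → ℂ) (hg : ContinuousOn g (Set.Icc (0:ℝ) 1))
    (w : ℂ) (hw : w ∈ Metric.ball (0:ℂ) 1) (hw0 : w ≠ 0) :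
    -(1 / (π : ℂ)) * ∫ z in Metric.ball (0:ℂ) 1, g (‖z‖) / (z - w)
      = (2 / w) * ∫ r in (0:ℝ)..‖w‖, g r * (r : ℂ) := by
  set a := ‖w‖ with ha_def
  have ha0 : 0 < a := norm_pos_iff.mpr hw0
  have ha1 : a < 1 := by simpa [Complex.dist_eq] using hw
  set f0 : ℂ → ℂ := fun z => g (‖z‖) / (z - w) with hf0_def
  set F : ℂ → ℂ := (Metric.ball (0:ℂ) 1).indicator f0 with hF_def
  obtain ⟨M, hM⟩ : ∃ M, ∀ x ∈ Icc (0:ℝ) 1, ‖g x‖ ≤ M :=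
    isCompact_Icc.exists_bound_of_continuousOn hg
  have hball_mem : ∀ z : ℂ, z ∈ Metric.ball (0:ℂ) 1 → ‖z‖ ∈ Icc (0:ℝ) 1 :=
    fun z hz => ⟨norm_nonneg z, le_of_lt (by simpa [Complex.dist_eq] using hz)⟩
  have hmeas : AEStronglyMeasurable f0 (volume.restrict (Metric.ball (0:ℂ) 1)) := by
    have h1 : ContinuousOn (fun z : ℂ => g (‖z‖)) (Metric.ball (0:ℂ) 1) :=
      hg.comp continuous_norm.continuousOn hball_mem
    have h2 : Measurable (fun z : ℂ => (z - w)⁻¹) := (measurable_id.sub_const w).inv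
    simp only [hf0_def, div_eq_mul_inv]; exact
      (h1.aestronglyMeasurable measurableSet_ball).mul h2.aestronglyMeasurable
  have hFint : IntegrableOn f0 (Metric.ball (0:ℂ) 1) := by
    apply Integrable.mono' ((aux_inv_norm_int w hw).const_mul M) hmeas
    filter_upwards [ae_restrict_mem measurableSet_ball] with z hz
    rw [hf0_def]
    simp only [norm_div]
    rw [div_eq_mul_inv]
    exact mul_le_mul_of_nonneg_right (hM _ (hball_mem z hz)) (inv_nonneg.2 (norm_nonneg _))
  have hFint' : Integrable F := (integrable_indicator_iff measurableSet_ball).2 hFint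
  set S : Set (ℝ × ℝ) := Ioo (0:ℝ) 1 ×ˢ Ioo (-π) π with hS_def
  have hSm : MeasurableSet S := measurableSet_Ioo.prod measurableSet_Ioo
  have hSsub : S ⊆ polarCoord.target := Set.prod_mono Ioo_subset_Ioi_self subset_rfl
  set φ : ℝ × ℝ → ℂ := fun p => (p.1 : ℂ) * g p.1 * (circleMap 0 p.1 p.2 - w)⁻¹ with hφ_def
  have hsymm : ∀ p : ℝ × ℝ, Complex.polarCoord.symm p = circleMap 0 p.1 p.2 := fun p => by
    rw [Complex.polarCoord_symm_apply, circleMap]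
    simp [Complex.exp_mul_I]
  have hEq : EqOn (fun p : ℝ × ℝ => p.1 • F (Complex.polarCoord.symm p)) (S.indicator φ)
      polarCoord.target := by
    intro p hp
    have habs : ‖Complex.polarCoord.symm p‖ = p.1 := by
      rw [Complex.norm_polarCoord_symm, abs_of_pos hp.1]
    by_cases h1 : p.1 < 1
    · have hm1 : Complex.polarCoord.symm p ∈ Metric.ball (0:ℂ) 1 := by
        rw [Metric.mem_ball, Complex.dist_eq, sub_zero, habs]; exact h1
      have hm2 : p ∈ S := ⟨⟨hp.1, h1⟩, hp.2⟩
      have hm1' : circleMap 0 p.1 p.2 ∈ Metric.ball (0:ℂ) 1 := by rw [← hsymm p]; exact hm1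
      have habs' : ‖circleMap 0 p.1 p.2‖ = p.1 := by rw [← hsymm p, habs]
      show p.1 • F (Complex.polarCoord.symm p) = S.indicator φ p
      rw [indicator_of_mem hm2, hF_def, hsymm p, indicator_of_mem hm1', hf0_def]
      simp only [habs', Complex.real_smul, div_eq_mul_inv, mul_assoc, hφ_def]
    · have hm1 : Complex.polarCoord.symm p ∉ Metric.ball (0:ℂ) 1 := by
        rw [Metric.mem_ball, Complex.dist_eq, sub_zero, habs]; exact h1
      have hm2 : p ∉ S := fun h => h1 h.1.2
      simp only [hF_def, indicator_of_notMem hm1, indicator_of_notMem hm2, smul_zero]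
  have hstep1 : (∫ z in Metric.ball (0:ℂ) 1, f0 z) = ∫ p in S, φ p := by
    rw [← integral_indicator measurableSet_ball, ← hF_def,
      ← Complex.integral_comp_polarCoord_symm F,
      setIntegral_congr_fun polarCoord.open_target.measurableSet hEq,
      setIntegral_indicator hSm, inter_eq_self_of_subset_right hSsub]
  have hφint : IntegrableOn φ S := by
    have h := (aux_integrable_polarC F).1 hFint'
    refine IntegrableOn.congr_fun (h.mono_set hSsub) (fun p hp => ?_) hSm
    exact (hEq (hSsub hp)).trans (indicator_of_mem hp φ)
  have hstep2 : (∫ p in S, φ p) = ∫ r in Ioo (0:ℝ) 1, ∫ θ in Ioo (-π) π, φ (r, θ) := by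
    rw [hS_def, Measure.volume_eq_prod, setIntegral_prod φ]
    rwa [hS_def, Measure.volume_eq_prod] at hφint
  have hae : ∀ᵐ r : ℝ, r ≠ a := by
    rw [ae_iff]
    have : {r : ℝ | ¬r ≠ a} = {a} := by ext x; simp
    rw [this]
    exact measure_singleton a
  have houter : (∫ r in Ioo (0:ℝ) 1, ∫ θ in Ioo (-π) π, φ (r, θ))
      = ∫ r in Ioo (0:ℝ) 1, (Ioo (0:ℝ) a).indicator
          (fun r => (r : ℂ) * g r * (-(2 * π) / w)) r := by
    apply setIntegral_congr_ae measurableSet_Ioo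
    filter_upwards [hae] with r hr hrm
    have hinner : (∫ θ in Ioo (-π) π, φ (r, θ))
        = ((r : ℂ) * g r) * ∫ θ in Ioo (-π) π, (circleMap 0 r θ - w)⁻¹ := by
      rw [← integral_const_mul]
    rw [hinner, aux_J w hw0 r hrm.1 hr]
    by_cases hlt : r < a
    · have hmem : r ∈ Ioo (0:ℝ) a := ⟨hrm.1, hlt⟩
      rw [if_pos hlt, indicator_of_mem hmem]
    · rw [if_neg hlt, indicator_of_notMem (fun h => hlt h.2), mul_zero]
  have hfinal : (∫ r in Ioo (0:ℝ) 1, (Ioo (0:ℝ) a).indicator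
        (fun r => (r : ℂ) * g r * (-(2 * π) / w)) r)
      = (∫ r in (0:ℝ)..a, g r * (r : ℂ)) * (-(2 * π) / w) := by
    rw [setIntegral_indicator measurableSet_Ioo,
      inter_eq_self_of_subset_right (Ioo_subset_Ioo le_rfl ha1.le),
      integral_mul_const]
    congr 1
    rw [intervalIntegral.integral_of_le ha0.le, integral_Ioc_eq_integral_Ioo]
    exact setIntegral_congr_fun measurableSet_Ioo fun r _ => mul_comm _ _
  rw [hstep1, hstep2, houter, hfinal]
  have hπ : (π : ℂ) ≠ 0 := Complex.ofReal_ne_zero.2 Real.pi_ne_zero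
  field_simp
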